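/- Let 𝒞 be a small category with pairwise coproducts and k a commutative ring. If 𝓕 : 𝒞 → Mod(k) is a split monoadditive representation, then Σ𝓕 is again a split monoadditive representation. Consequently, every split monoadditive representation is ∞-monoadditive. -/

import Mathlib

open CategoryTheory CategoryTheory.Limits

namespace Stmt9

variable {k : Type} [CommRing k] {C : Type} [SmallCategory C] [HasBinaryCoproducts C]

/-- The functor `sq : 𝒞 ⥤ 𝒞`, `c ↦ c ⊔ c`. -/
@[simps]
noncomputable def sq : C ⥤ C where
  obj c := c ⨿ c
  map f := coprod.map f f

/-- The coproduct bifunctor `𝒞 × 𝒞 ⥤ 𝒞`, `(c₁, c₂) ↦ c₁ ⊔ c₂`. -/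
@[simps]
noncomputable def coprodF : C × C ⥤ C where
  obj p := p.1 ⨿ p.2
  map f := coprod.map f.1 f.2

/-- The bifunctor `(c₁, c₂) ↦ 𝓕(c₁) ⊕ 𝓕(c₂)`. -/
noncomputable def biSum (F : C ⥤ ModuleCat.{0} k) : C × C ⥤ ModuleCat.{0} k :=
  (CategoryTheory.Prod.fst C C ⋙ F) ⊞ (CategoryTheory.Prod.snd C C ⋙ F)

/-- The first component `𝓕(c₁) ⟶ 𝓕(c₁ ⊔ c₂)` of the canonical natural transformation. -/
@[simps]
noncomputable def canNatFst (F : C ⥤ ModuleCat.{0} k) :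
    (CategoryTheory.Prod.fst C C ⋙ F) ⟶ coprodF ⋙ F where
  app p := F.map coprod.inl
  naturality p q f := by
    change F.map f.1 ≫ F.map coprod.inl = F.map coprod.inl ≫ F.map (coprod.map f.1 f.2)
    rw [← F.map_comp, ← F.map_comp]
    congr 1
    simp

/-- The second component `𝓕(c₂) ⟶ 𝓕(c₁ ⊔ c₂)` of the canonical natural transformation. -/
@[simps]
noncomputable def canNatSnd (F : C ⥤ ModuleCat.{0} k) :
    (CategoryTheory.Prod.snd C C ⋙ F) ⟶ coprodF ⋙ F where
  app p := F.map coprod.inr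
  naturality p q f := by
    change F.map f.2 ≫ F.map coprod.inr = F.map coprod.inr ≫ F.map (coprod.map f.1 f.2)
    rw [← F.map_comp, ← F.map_comp]
    congr 1
    simp

/-- The canonical natural transformation of bifunctors
`(𝓕(i₁), 𝓕(i₂)) : 𝓕(c₁) ⊕ 𝓕(c₂) ⟶ 𝓕(c₁ ⊔ c₂)` induced by the coproduct coprojections. -/
noncomputable def canNat (F : C ⥤ ModuleCat.{0} k) : biSum F ⟶ coprodF ⋙ F :=
  biprod.desc (canNatFst F) (canNatSnd F)

/-- A representation `𝓕` is split monoadditive if the canonical natural transformation of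
bifunctors `𝓕(c₁) ⊕ 𝓕(c₂) ⟶ 𝓕(c₁ ⊔ c₂)` admits a natural retraction. -/
def SplitMonoadditive (F : C ⥤ ModuleCat.{0} k) : Prop :=
  ∃ r : (coprodF ⋙ F) ⟶ biSum F, canNat F ≫ r = 𝟙 (biSum F)

/-- The canonical map `𝓕(c₁) ⊕ 𝓕(c₂) ⟶ 𝓕(c₁ ⊔ c₂)` at a single pair of objects. -/
noncomputable def canMap (F : C ⥤ ModuleCat.{0} k) (c₁ c₂ : C) :
    F.obj c₁ ⊞ F.obj c₂ ⟶ F.obj (c₁ ⨿ c₂) :=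
  biprod.desc (F.map coprod.inl) (F.map coprod.inr)

/-- Monoadditivity: all canonical maps are monomorphisms. -/
def Monoadditive (F : C ⥤ ModuleCat.{0} k) : Prop :=
  ∀ c₁ c₂ : C, Mono (canMap F c₁ c₂)

/-- The natural transformation `T_𝓕 : 𝓕 ⊕ 𝓕 ⟶ 𝓕 ∘ sq`. -/
noncomputable def TF (F : C ⥤ ModuleCat.{0} k) : F ⊞ F ⟶ sq ⋙ F :=
  biprod.desc (F.leftUnitor.inv ≫ Functor.whiskerRight ⟨fun c => coprod.inl, by intro X Y f; exact (coprod.inl_map f f).symm⟩ F)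
    (F.leftUnitor.inv ≫ Functor.whiskerRight ⟨fun c => coprod.inr, by intro X Y f; exact (coprod.inr_map f f).symm⟩ F)

/-- `Σ𝓕 = coker(T_𝓕)`. -/
noncomputable def SigmaF (F : C ⥤ ModuleCat.{0} k) : C ⥤ ModuleCat.{0} k :=
  cokernel (TF F)

/-- `n`-monoadditivity. -/
def NMonoadditive : ℕ → (C ⥤ ModuleCat.{0} k) → Prop
  | 0, _ => True
  | n + 1, F => Monoadditive F ∧ NMonoadditive n (SigmaF F)

end Stmt9

section Aux
open Stmt9
variable {k : Type} [CommRing k] {C : Type} [SmallCategory C] [HasBinaryCoproducts C]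

/-- the transpose map `(c₁ ⊔ c₂) ⊔ (c₁ ⊔ c₂) ⟶ (c₁ ⊔ c₁) ⊔ (c₂ ⊔ c₂)`. -/
noncomputable def sg (c₁ c₂ : C) : (c₁ ⨿ c₂) ⨿ (c₁ ⨿ c₂) ⟶ (c₁ ⨿ c₁) ⨿ (c₂ ⨿ c₂) :=
  coprod.desc (coprod.map coprod.inl coprod.inl) (coprod.map coprod.inr coprod.inr)

lemma sg_natural {c₁ c₂ d₁ d₂ : C} (f : c₁ ⟶ d₁) (g : c₂ ⟶ d₂) :
    coprod.map (coprod.map f g) (coprod.map f g) ≫ sg d₁ d₂ =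
      sg c₁ c₂ ≫ coprod.map (coprod.map f f) (coprod.map g g) := by
  simp [sg]

lemma sg_l1 (c₁ c₂ : C) :
    coprod.map coprod.inl coprod.inl ≫ sg c₁ c₂ = (coprod.inl : c₁ ⨿ c₁ ⟶ _) := by
  ext <;> simp [sg, coprod.inl_desc, coprod.inr_desc]

lemma sg_l2 (c₁ c₂ : C) :
    coprod.map coprod.inr coprod.inr ≫ sg c₁ c₂ = (coprod.inr : c₂ ⨿ c₂ ⟶ _) := by
  ext <;> simp [sg, coprod.inl_desc, coprod.inr_desc]

lemma sg_inl (c₁ c₂ : C) :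
    (coprod.inl : c₁ ⨿ c₂ ⟶ _) ≫ sg c₁ c₂ = coprod.map coprod.inl coprod.inl := by
  simp [sg, coprod.inl_desc]

lemma sg_inr (c₁ c₂ : C) :
    (coprod.inr : c₁ ⨿ c₂ ⟶ _) ≫ sg c₁ c₂ = coprod.map coprod.inr coprod.inr := by
  simp [sg, coprod.inr_desc]

end Aux
section Aux2
open Stmt9
variable {k : Type} [CommRing k] {C : Type} [SmallCategory C] [HasBinaryCoproducts C]
variable (F : C ⥤ ModuleCat.{0} k)

noncomputable def r1 (r : coprodF ⋙ F ⟶ biSum F) :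
    coprodF ⋙ F ⟶ CategoryTheory.Prod.fst C C ⋙ F := r ≫ biprod.fst

noncomputable def r2 (r : coprodF ⋙ F ⟶ biSum F) :
    coprodF ⋙ F ⟶ CategoryTheory.Prod.snd C C ⋙ F := r ≫ biprod.snd

variable {F} {r : coprodF ⋙ F ⟶ biSum F} (hr : canNat F ≫ r = 𝟙 (biSum F))

include hr

lemma h11 : canNatFst F ≫ r1 F r = 𝟙 _ := by
  have : canNatFst F ≫ r1 F r = biprod.inl ≫ (canNat F ≫ r) ≫ biprod.fst := by
    simp only [r1, canNat]
    erw [Category.assoc, biprod.inl_desc_assoc]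
  erw [this, hr]; simp [biSum]

lemma h12 : canNatFst F ≫ r2 F r = 0 := by
  have : canNatFst F ≫ r2 F r = biprod.inl ≫ (canNat F ≫ r) ≫ biprod.snd := by
    simp only [r2, canNat]
    erw [Category.assoc, biprod.inl_desc_assoc]
  erw [this, hr]; simp [biSum]

lemma h21 : canNatSnd F ≫ r1 F r = 0 := by
  have : canNatSnd F ≫ r1 F r = biprod.inr ≫ (canNat F ≫ r) ≫ biprod.fst := by
    simp only [r1, canNat]
    erw [Category.assoc, biprod.inr_desc_assoc]
  erw [this, hr]; simp [biSum]

lemma h22 : canNatSnd F ≫ r2 F r = 𝟙 _ := by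
  have : canNatSnd F ≫ r2 F r = biprod.inr ≫ (canNat F ≫ r) ≫ biprod.snd := by
    simp only [r2, canNat]
    erw [Category.assoc, biprod.inr_desc_assoc]
  erw [this, hr]; simp [biSum]

end Aux2
section Aux3
open Stmt9
variable {k : Type} [CommRing k] {C : Type} [SmallCategory C] [HasBinaryCoproducts C]
variable (F : C ⥤ ModuleCat.{0} k)

lemma inlTF_app (c : C) :
    ((biprod.inl : F ⟶ F ⊞ F) ≫ TF F).app c = F.map coprod.inl := by
  simp [TF]
  rfl

lemma inrTF_app (c : C) :
    ((biprod.inr : F ⟶ F ⊞ F) ≫ TF F).app c = F.map coprod.inr := by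
  simp [TF]
  rfl

lemma inl_pi (c : C) :
    F.map (coprod.inl : c ⟶ c ⨿ c) ≫ (cokernel.π (TF F)).app c = 0 := by
  have h2 : ((biprod.inl : F ⟶ F ⊞ F) ≫ TF F) ≫ cokernel.π (TF F) = 0 := by
    rw [Category.assoc, cokernel.condition, comp_zero]
  have h3 := NatTrans.congr_app h2 c
  rw [NatTrans.comp_app, inlTF_app] at h3
  simp only [NatTrans.app_zero] at h3
  exact h3

lemma inr_pi (c : C) :
    F.map (coprod.inr : c ⟶ c ⨿ c) ≫ (cokernel.π (TF F)).app c = 0 := by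
  have h2 : ((biprod.inr : F ⟶ F ⊞ F) ≫ TF F) ≫ cokernel.π (TF F) = 0 := by
    rw [Category.assoc, cokernel.condition, comp_zero]
  have h3 := NatTrans.congr_app h2 c
  rw [NatTrans.comp_app, inrTF_app] at h3
  simp only [NatTrans.app_zero] at h3
  exact h3

/-- `ψ₁ : 𝓕((c₁⊔c₂)⊔(c₁⊔c₂)) ⟶ Σ𝓕(c₁)` as a natural transformation. -/
noncomputable def psi1 (r : coprodF ⋙ F ⟶ biSum F) :
    coprodF ⋙ (sq ⋙ F) ⟶ CategoryTheory.Prod.fst C C ⋙ SigmaF F where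
  app p := F.map (sg p.1 p.2) ≫ (r1 F r).app (p.1 ⨿ p.1, p.2 ⨿ p.2) ≫
      (cokernel.π (TF F)).app p.1
  naturality p q h := by
    dsimp
    have e1 : F.map (coprod.map (coprod.map h.1 h.2) (coprod.map h.1 h.2)) ≫
        F.map (sg q.1 q.2) =
        F.map (sg p.1 p.2) ≫ F.map (coprod.map (coprod.map h.1 h.1) (coprod.map h.2 h.2)) := by
      rw [← F.map_comp, ← F.map_comp, sg_natural]
    have e2 := (r1 F r).naturality
      (show ((p.1 ⨿ p.1, p.2 ⨿ p.2) : C × C) ⟶ (q.1 ⨿ q.1, q.2 ⨿ q.2) from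
        (coprod.map h.1 h.1, coprod.map h.2 h.2))
    have e3 := (cokernel.π (TF F)).naturality h.1
    dsimp at e2 e3
    erw [reassoc_of% e1, reassoc_of% e2, e3]
    simp [SigmaF]
    rfl

noncomputable def psi2 (r : coprodF ⋙ F ⟶ biSum F) :
    coprodF ⋙ (sq ⋙ F) ⟶ CategoryTheory.Prod.snd C C ⋙ SigmaF F where
  app p := F.map (sg p.1 p.2) ≫ (r2 F r).app (p.1 ⨿ p.1, p.2 ⨿ p.2) ≫
      (cokernel.π (TF F)).app p.2
  naturality p q h := by
    dsimp
    have e1 : F.map (coprod.map (coprod.map h.1 h.2) (coprod.map h.1 h.2)) ≫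
        F.map (sg q.1 q.2) =
        F.map (sg p.1 p.2) ≫ F.map (coprod.map (coprod.map h.1 h.1) (coprod.map h.2 h.2)) := by
      rw [← F.map_comp, ← F.map_comp, sg_natural]
    have e2 := (r2 F r).naturality
      (show ((p.1 ⨿ p.1, p.2 ⨿ p.2) : C × C) ⟶ (q.1 ⨿ q.1, q.2 ⨿ q.2) from
        (coprod.map h.1 h.1, coprod.map h.2 h.2))
    have e3 := (cokernel.π (TF F)).naturality h.2
    dsimp at e2 e3
    erw [reassoc_of% e1, reassoc_of% e2, e3]
    simp [SigmaF]
    rfl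

end Aux3
section Aux4
open Stmt9
variable {k : Type} [CommRing k] {C : Type} [SmallCategory C] [HasBinaryCoproducts C]

instance whiskering_additive (K : C × C ⥤ C) :
    ((Functor.whiskeringLeft (C × C) C (ModuleCat.{0} k)).obj K).Additive where
  map_add := by
    intros
    apply NatTrans.ext; funext p
    simp

variable (F : C ⥤ ModuleCat.{0} k)

lemma comp_psi1_inl (r : coprodF ⋙ F ⟶ biSum F) (p : C × C) :
    F.map (coprod.inl : (p.1 ⨿ p.2) ⟶ _) ≫ (psi1 F r).app p = 0 := by
  have e2 := (r1 F r).naturality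
    (show (p : C × C) ⟶ (p.1 ⨿ p.1, p.2 ⨿ p.2) from (coprod.inl, coprod.inl))
  dsimp at e2
  dsimp [psi1]
  erw [← F.map_comp_assoc, sg_inl, reassoc_of% e2, inl_pi, comp_zero]
  rfl

lemma comp_psi1_inr (r : coprodF ⋙ F ⟶ biSum F) (p : C × C) :
    F.map (coprod.inr : (p.1 ⨿ p.2) ⟶ _) ≫ (psi1 F r).app p = 0 := by
  have e2 := (r1 F r).naturality
    (show (p : C × C) ⟶ (p.1 ⨿ p.1, p.2 ⨿ p.2) from (coprod.inr, coprod.inr))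
  dsimp at e2
  dsimp [psi1]
  erw [← F.map_comp_assoc, sg_inr, reassoc_of% e2, inr_pi, comp_zero]
  rfl

lemma comp_psi2_inl (r : coprodF ⋙ F ⟶ biSum F) (p : C × C) :
    F.map (coprod.inl : (p.1 ⨿ p.2) ⟶ _) ≫ (psi2 F r).app p = 0 := by
  have e2 := (r2 F r).naturality
    (show (p : C × C) ⟶ (p.1 ⨿ p.1, p.2 ⨿ p.2) from (coprod.inl, coprod.inl))
  dsimp at e2
  dsimp [psi2]
  erw [← F.map_comp_assoc, sg_inl, reassoc_of% e2, inl_pi, comp_zero]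
  rfl

lemma comp_psi2_inr (r : coprodF ⋙ F ⟶ biSum F) (p : C × C) :
    F.map (coprod.inr : (p.1 ⨿ p.2) ⟶ _) ≫ (psi2 F r).app p = 0 := by
  have e2 := (r2 F r).naturality
    (show (p : C × C) ⟶ (p.1 ⨿ p.1, p.2 ⨿ p.2) from (coprod.inr, coprod.inr))
  dsimp at e2
  dsimp [psi2]
  erw [← F.map_comp_assoc, sg_inr, reassoc_of% e2, inr_pi, comp_zero]
  rfl

lemma hpsi1 (r : coprodF ⋙ F ⟶ biSum F) :
    ((Functor.whiskeringLeft (C × C) C (ModuleCat.{0} k)).obj coprodF).map (TF F) ≫ psi1 F r = 0 := by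
  have htot : TF F = biprod.fst ≫ ((biprod.inl : F ⟶ F ⊞ F) ≫ TF F) +
      biprod.snd ≫ ((biprod.inr : F ⟶ F ⊞ F) ≫ TF F) := by
    rw [← Category.assoc, ← Category.assoc, ← Preadditive.add_comp, biprod.total,
      Category.id_comp]
  have hA : ((Functor.whiskeringLeft (C × C) C (ModuleCat.{0} k)).obj coprodF).map
      ((biprod.inl : F ⟶ F ⊞ F) ≫ TF F) ≫ psi1 F r = 0 := by
    apply NatTrans.ext; funext p
    rw [NatTrans.comp_app, NatTrans.app_zero]
    rw [show (((Functor.whiskeringLeft (C × C) C (ModuleCat.{0} k)).obj coprodF).map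
      ((biprod.inl : F ⟶ F ⊞ F) ≫ TF F)).app p = F.map coprod.inl from inlTF_app F (p.1 ⨿ p.2)]
    exact comp_psi1_inl F r p
  have hB : ((Functor.whiskeringLeft (C × C) C (ModuleCat.{0} k)).obj coprodF).map
      ((biprod.inr : F ⟶ F ⊞ F) ≫ TF F) ≫ psi1 F r = 0 := by
    apply NatTrans.ext; funext p
    rw [NatTrans.comp_app, NatTrans.app_zero]
    rw [show (((Functor.whiskeringLeft (C × C) C (ModuleCat.{0} k)).obj coprodF).map
      ((biprod.inr : F ⟶ F ⊞ F) ≫ TF F)).app p = F.map coprod.inr from inrTF_app F (p.1 ⨿ p.2)]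
    exact comp_psi1_inr F r p
  rw [Functor.map_comp, Category.assoc] at hA hB
  rw [htot]
  simp only [Functor.map_add, Functor.map_comp, Preadditive.add_comp, Category.assoc, hA, hB,
    comp_zero, add_zero]

lemma hpsi2 (r : coprodF ⋙ F ⟶ biSum F) :
    ((Functor.whiskeringLeft (C × C) C (ModuleCat.{0} k)).obj coprodF).map (TF F) ≫ psi2 F r = 0 := by
  have htot : TF F = biprod.fst ≫ ((biprod.inl : F ⟶ F ⊞ F) ≫ TF F) +
      biprod.snd ≫ ((biprod.inr : F ⟶ F ⊞ F) ≫ TF F) := by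
    rw [← Category.assoc, ← Category.assoc, ← Preadditive.add_comp, biprod.total,
      Category.id_comp]
  have hA : ((Functor.whiskeringLeft (C × C) C (ModuleCat.{0} k)).obj coprodF).map
      ((biprod.inl : F ⟶ F ⊞ F) ≫ TF F) ≫ psi2 F r = 0 := by
    apply NatTrans.ext; funext p
    rw [NatTrans.comp_app, NatTrans.app_zero]
    rw [show (((Functor.whiskeringLeft (C × C) C (ModuleCat.{0} k)).obj coprodF).map
      ((biprod.inl : F ⟶ F ⊞ F) ≫ TF F)).app p = F.map coprod.inl from inlTF_app F (p.1 ⨿ p.2)]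
    exact comp_psi2_inl F r p
  have hB : ((Functor.whiskeringLeft (C × C) C (ModuleCat.{0} k)).obj coprodF).map
      ((biprod.inr : F ⟶ F ⊞ F) ≫ TF F) ≫ psi2 F r = 0 := by
    apply NatTrans.ext; funext p
    rw [NatTrans.comp_app, NatTrans.app_zero]
    rw [show (((Functor.whiskeringLeft (C × C) C (ModuleCat.{0} k)).obj coprodF).map
      ((biprod.inr : F ⟶ F ⊞ F) ≫ TF F)).app p = F.map coprod.inr from inrTF_app F (p.1 ⨿ p.2)]
    exact comp_psi2_inr F r p
  rw [Functor.map_comp, Category.assoc] at hA hB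
  rw [htot]
  simp only [Functor.map_add, Functor.map_comp, Preadditive.add_comp, Category.assoc, hA, hB,
    comp_zero, add_zero]

end Aux4
section Aux5
open Stmt9
variable {k : Type} [CommRing k] {C : Type} [SmallCategory C] [HasBinaryCoproducts C]
variable (F : C ⥤ ModuleCat.{0} k)

noncomputable def D1 (r : coprodF ⋙ F ⟶ biSum F) :
    coprodF ⋙ SigmaF F ⟶ CategoryTheory.Prod.fst C C ⋙ SigmaF F :=
  (inv (cokernelComparison (TF F) ((Functor.whiskeringLeft (C × C) C (ModuleCat.{0} k)).obj coprodF)) :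
    ((Functor.whiskeringLeft (C × C) C (ModuleCat.{0} k)).obj coprodF).obj (cokernel (TF F)) ⟶ _) ≫
    cokernel.desc _ (psi1 F r) (hpsi1 F r)

noncomputable def D2 (r : coprodF ⋙ F ⟶ biSum F) :
    coprodF ⋙ SigmaF F ⟶ CategoryTheory.Prod.snd C C ⋙ SigmaF F :=
  (inv (cokernelComparison (TF F) ((Functor.whiskeringLeft (C × C) C (ModuleCat.{0} k)).obj coprodF)) :
    ((Functor.whiskeringLeft (C × C) C (ModuleCat.{0} k)).obj coprodF).obj (cokernel (TF F)) ⟶ _) ≫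
    cokernel.desc _ (psi2 F r) (hpsi2 F r)

lemma pi_D1 (r : coprodF ⋙ F ⟶ biSum F) :
    ((Functor.whiskeringLeft (C × C) C (ModuleCat.{0} k)).obj coprodF).map (cokernel.π (TF F)) ≫
      D1 F r = psi1 F r := by
  erw [D1, ← π_comp_cokernelComparison, Category.assoc, IsIso.hom_inv_id_assoc, cokernel.π_desc]

lemma pi_D2 (r : coprodF ⋙ F ⟶ biSum F) :
    ((Functor.whiskeringLeft (C × C) C (ModuleCat.{0} k)).obj coprodF).map (cokernel.π (TF F)) ≫
      D2 F r = psi2 F r := by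
  erw [D2, ← π_comp_cokernelComparison, Category.assoc, IsIso.hom_inv_id_assoc, cokernel.π_desc]

lemma epi_wl (K : C × C ⥤ C) :
    Epi (((Functor.whiskeringLeft (C × C) C (ModuleCat.{0} k)).obj K).map (cokernel.π (TF F))) := by
  rw [← π_comp_cokernelComparison]
  exact epi_comp _ _

/-- `ι₁ : fst ⟶ coprodF`. -/
noncomputable def iota1 : (CategoryTheory.Prod.fst C C : C × C ⥤ C) ⟶ coprodF where
  app p := coprod.inl
  naturality p q h := by simp; exact (coprod.inl_map _ _).symm

noncomputable def iota2 : (CategoryTheory.Prod.snd C C : C × C ⥤ C) ⟶ coprodF where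
  app p := coprod.inr
  naturality p q h := by simp; exact (coprod.inr_map _ _).symm

lemma A1 : ((Functor.whiskeringLeft (C × C) C (ModuleCat.{0} k)).obj
      (CategoryTheory.Prod.fst C C)).map (cokernel.π (TF F)) ≫ canNatFst (SigmaF F) =
    Functor.whiskerRight iota1 (sq ⋙ F) ≫
      ((Functor.whiskeringLeft (C × C) C (ModuleCat.{0} k)).obj coprodF).map (cokernel.π (TF F)) := by
  apply NatTrans.ext; funext p
  exact ((cokernel.π (TF F)).naturality (coprod.inl : p.1 ⟶ p.1 ⨿ p.2)).symm

lemma A2 : ((Functor.whiskeringLeft (C × C) C (ModuleCat.{0} k)).obj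
      (CategoryTheory.Prod.snd C C)).map (cokernel.π (TF F)) ≫ canNatSnd (SigmaF F) =
    Functor.whiskerRight iota2 (sq ⋙ F) ≫
      ((Functor.whiskeringLeft (C × C) C (ModuleCat.{0} k)).obj coprodF).map (cokernel.π (TF F)) := by
  apply NatTrans.ext; funext p
  exact ((cokernel.π (TF F)).naturality (coprod.inr : p.2 ⟶ p.1 ⨿ p.2)).symm

variable {F} {r : coprodF ⋙ F ⟶ biSum F} (hr : canNat F ≫ r = 𝟙 (biSum F))
include hr

lemma B11 : Functor.whiskerRight iota1 (sq ⋙ F) ≫ psi1 F r =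
    ((Functor.whiskeringLeft (C × C) C (ModuleCat.{0} k)).obj
      (CategoryTheory.Prod.fst C C)).map (cokernel.π (TF F)) := by
  apply NatTrans.ext; funext p
  have h := NatTrans.congr_app (h11 hr) ((p.1 ⨿ p.1, p.2 ⨿ p.2) : C × C)
  rw [NatTrans.comp_app] at h
  dsimp at h
  dsimp [psi1, iota1]
  erw [← F.map_comp_assoc, sg_l1, reassoc_of% h]

lemma B12 : Functor.whiskerRight iota1 (sq ⋙ F) ≫ psi2 F r = 0 := by
  apply NatTrans.ext; funext p
  have h := NatTrans.congr_app (h12 hr) ((p.1 ⨿ p.1, p.2 ⨿ p.2) : C × C)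
  rw [NatTrans.comp_app] at h
  dsimp at h
  dsimp [psi2, iota1]
  erw [← F.map_comp_assoc, sg_l1, reassoc_of% h, zero_comp]
  rfl

lemma B21 : Functor.whiskerRight iota2 (sq ⋙ F) ≫ psi1 F r = 0 := by
  apply NatTrans.ext; funext p
  have h := NatTrans.congr_app (h21 hr) ((p.1 ⨿ p.1, p.2 ⨿ p.2) : C × C)
  rw [NatTrans.comp_app] at h
  dsimp at h
  dsimp [psi1, iota2]
  erw [← F.map_comp_assoc, sg_l2, reassoc_of% h, zero_comp]
  rfl

lemma B22 : Functor.whiskerRight iota2 (sq ⋙ F) ≫ psi2 F r =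
    ((Functor.whiskeringLeft (C × C) C (ModuleCat.{0} k)).obj
      (CategoryTheory.Prod.snd C C)).map (cokernel.π (TF F)) := by
  apply NatTrans.ext; funext p
  have h := NatTrans.congr_app (h22 hr) ((p.1 ⨿ p.1, p.2 ⨿ p.2) : C × C)
  rw [NatTrans.comp_app] at h
  dsimp at h
  dsimp [psi2, iota2]
  erw [← F.map_comp_assoc, sg_l2, reassoc_of% h]

lemma E11 : canNatFst (SigmaF F) ≫ D1 F r = 𝟙 _ := by
  haveI := epi_wl F (CategoryTheory.Prod.fst C C)
  erw [← cancel_epi (((Functor.whiskeringLeft (C × C) C (ModuleCat.{0} k)).obj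
    (CategoryTheory.Prod.fst C C)).map (cokernel.π (TF F)))]
  erw [← Category.assoc, A1, Category.assoc, pi_D1, B11 hr]
  exact (Category.comp_id _).symm

lemma E12 : canNatFst (SigmaF F) ≫ D2 F r = 0 := by
  haveI := epi_wl F (CategoryTheory.Prod.fst C C)
  erw [← cancel_epi (((Functor.whiskeringLeft (C × C) C (ModuleCat.{0} k)).obj
    (CategoryTheory.Prod.fst C C)).map (cokernel.π (TF F)))]
  erw [← Category.assoc, A1, Category.assoc, pi_D2, B12 hr, comp_zero]

lemma E21 : canNatSnd (SigmaF F) ≫ D1 F r = 0 := by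
  haveI := epi_wl F (CategoryTheory.Prod.snd C C)
  erw [← cancel_epi (((Functor.whiskeringLeft (C × C) C (ModuleCat.{0} k)).obj
    (CategoryTheory.Prod.snd C C)).map (cokernel.π (TF F)))]
  erw [← Category.assoc, A2, Category.assoc, pi_D1, B21 hr, comp_zero]

lemma E22 : canNatSnd (SigmaF F) ≫ D2 F r = 𝟙 _ := by
  haveI := epi_wl F (CategoryTheory.Prod.snd C C)
  erw [← cancel_epi (((Functor.whiskeringLeft (C × C) C (ModuleCat.{0} k)).obj
    (CategoryTheory.Prod.snd C C)).map (cokernel.π (TF F)))]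
  erw [← Category.assoc, A2, Category.assoc, pi_D2, B22 hr]
  exact (Category.comp_id _).symm

end Aux5
section Aux6
open Stmt9
variable {k : Type} [CommRing k] {C : Type} [SmallCategory C] [HasBinaryCoproducts C]
variable (F : C ⥤ ModuleCat.{0} k)

lemma sigma_split (hF : SplitMonoadditive F) : SplitMonoadditive (SigmaF F) := by
  obtain ⟨r, hr⟩ := hF
  refine ⟨biprod.lift (D1 F r) (D2 F r), ?_⟩
  simp only [canNat]
  apply biprod.hom_ext
  · erw [Category.assoc, biprod.lift_fst, Category.id_comp]
    apply biprod.hom_ext'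
    · erw [biprod.inl_desc_assoc, E11 hr, biprod.inl_fst]
    · erw [biprod.inr_desc_assoc, E21 hr, biprod.inr_fst]
  · erw [Category.assoc, biprod.lift_snd, Category.id_comp]
    apply biprod.hom_ext'
    · erw [biprod.inl_desc_assoc, E12 hr, biprod.inl_snd]
    · erw [biprod.inr_desc_assoc, E22 hr, biprod.inr_snd]

lemma mono_of_split (hF : SplitMonoadditive F) : Monoadditive F := by
  obtain ⟨r, hr⟩ := hF
  intro c₁ c₂
  have e11 := NatTrans.congr_app (h11 hr) ((c₁, c₂) : C × C)
  have e12 := NatTrans.congr_app (h12 hr) ((c₁, c₂) : C × C)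
  have e21 := NatTrans.congr_app (h21 hr) ((c₁, c₂) : C × C)
  have e22 := NatTrans.congr_app (h22 hr) ((c₁, c₂) : C × C)
  rw [NatTrans.comp_app] at e11 e12 e21 e22
  dsimp at e11 e12 e21 e22
  haveI : IsSplitMono (canMap F c₁ c₂) := IsSplitMono.mk'
    { retraction := biprod.lift ((r1 F r).app (c₁, c₂)) ((r2 F r).app (c₁, c₂))
      id := by
        simp only [canMap]
        apply biprod.hom_ext
        · erw [Category.assoc, biprod.lift_fst, Category.id_comp]
          apply biprod.hom_ext'
          · erw [biprod.inl_desc_assoc, e11, biprod.inl_fst]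
          · erw [biprod.inr_desc_assoc, e21, biprod.inr_fst]
        · erw [Category.assoc, biprod.lift_snd, Category.id_comp]
          apply biprod.hom_ext'
          · erw [biprod.inl_desc_assoc, e12, biprod.inl_snd]
          · erw [biprod.inr_desc_assoc, e22, biprod.inr_snd]  }
  infer_instance

end Aux6



open Stmt9 in
/-- If `𝓕 : 𝒞 ⥤ Mod(k)` is a split monoadditive representation of a small
category with pairwise coproducts, then `Σ𝓕` is again split monoadditive; consequently every
split monoadditive representation is `∞`-monoadditive. -/
theorem splitMonoadditive_sigma_and_infty_monoadditive
    (k : Type) [CommRing k] (C : Type) [SmallCategory C] [HasBinaryCoproducts C]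
    (F : C ⥤ ModuleCat.{0} k) (hF : SplitMonoadditive F) :
    SplitMonoadditive (SigmaF F) ∧ ∀ n : ℕ, NMonoadditive n F := by
  have key : ∀ (n : ℕ) (F' : C ⥤ ModuleCat.{0} k),
      SplitMonoadditive F' → NMonoadditive n F' := by
    intro n
    induction n with
    | zero => intro F' _; trivial
    | succ n ih =>
      intro F' hF'
      exact ⟨mono_of_split F' hF', ih (SigmaF F') (sigma_split F' hF')⟩
  exact ⟨sigma_split F hF, fun n => key n F hF⟩
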